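/- arXiv:2004.04526 — 4 statements merged into one kernel-verified Lean document; each statement's English description precedes it below -/
import Mathlib

section
/- In a cartesian monoidal category C (a category with finite products), for all objects A, B, X, Y, the set of monoidal lenses ∫^M C(A, M × X) × C(M × Y, B) is in bijection with C(A, X) × C(A × Y, B). -/
open CategoryTheory CategoryTheory.Limits

universe u v

/-- In a cartesian category `C`, a monoidal lens `∫^M C(A, M × X) × C(M × Y, B)` is the same
as a pair of morphisms `C(A, X) × C(A × Y, B)`; the bijection sends the class of `(M, f, g)`
to `(snd ∘ f, g ∘ ((fst ∘ f) × id_Y))`. -/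
theorem cartesian_lens_bijection {C : Type u} [Category.{v} C] [HasFiniteProducts C]
    (A B X Y : C) :
    ∃ e : Quot (fun (a b : Σ M : C, (A ⟶ M ⨯ X) × (M ⨯ Y ⟶ B)) =>
          ∃ m : a.1 ⟶ b.1, b.2.1 = a.2.1 ≫ prod.map m (𝟙 X) ∧
            a.2.2 = prod.map m (𝟙 Y) ≫ b.2.2)
        ≃ ((A ⟶ X) × (A ⨯ Y ⟶ B)),
      ∀ (M : C) (f : A ⟶ M ⨯ X) (g : M ⨯ Y ⟶ B),
        e (Quot.mk _ ⟨M, f, g⟩) =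
          (f ≫ prod.snd, prod.map (f ≫ prod.fst) (𝟙 Y) ≫ g) := by
  set r := fun (a b : Σ M : C, (A ⟶ M ⨯ X) × (M ⨯ Y ⟶ B)) =>
      ∃ m : a.1 ⟶ b.1, b.2.1 = a.2.1 ≫ prod.map m (𝟙 X) ∧
        a.2.2 = prod.map m (𝟙 Y) ≫ b.2.2 with hr
  refine ⟨{
    toFun := Quot.lift
      (fun a => (a.2.1 ≫ prod.snd, prod.map (a.2.1 ≫ prod.fst) (𝟙 Y) ≫ a.2.2)) ?_
    invFun := fun p => Quot.mk r ⟨A, prod.lift (𝟙 A) p.1, p.2⟩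
    left_inv := ?_
    right_inv := ?_ }, fun M f g => rfl⟩
  · rintro ⟨M, f, g⟩ ⟨N, f', g'⟩ ⟨m, h1, h2⟩
    dsimp only at h1 h2
    simp only [h1, h2, Prod.mk.injEq, Category.assoc, prod.map_snd, prod.map_fst,
      prod.map_map_assoc, Category.comp_id, Category.id_comp]
  · rintro ⟨M, f, g⟩
    · refine Quot.sound ⟨f ≫ prod.fst, ?_, rfl⟩
      dsimp
      apply prod.hom_ext
      · simp
        exact (prod.lift_fst _ _).symm
      · simp
        exact (prod.lift_snd _ _).symm
  · rintro ⟨h, k⟩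
    simp only [Prod.mk.injEq]
    exact ⟨prod.lift_snd _ _, by rw [prod.lift_fst, prod.map_id_id, Category.id_comp]⟩
end

section
/- In a cocartesian monoidal category C (a category with finite coproducts), for all objects S, T, A, B, the set ∫^M C(S, M + A) × C(M + B, T) is in bijection with C(S, T + A) × C(B, T). (Prisms in a cocartesian category reduce to such a pair.) -/
open CategoryTheory CategoryTheory.Limits

universe u v

/-- In a cocartesian category `C`, a prism `∫^M C(S, M + A) × C(M + B, T)` is the same as a
pair of morphisms `C(S, T + A) × C(B, T)`. -/
theorem cocartesian_prism_bijection {C : Type u} [Category.{v} C] [HasFiniteCoproducts C]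
    (S T A B : C) :
    Nonempty
      (Quot (fun (a b : Σ M : C, (S ⟶ M ⨿ A) × (M ⨿ B ⟶ T)) =>
          ∃ m : a.1 ⟶ b.1, b.2.1 = a.2.1 ≫ coprod.map m (𝟙 A) ∧
            a.2.2 = coprod.map m (𝟙 B) ≫ b.2.2)
        ≃ ((S ⟶ T ⨿ A) × (B ⟶ T))) := by
  set r : (Σ M : C, (S ⟶ M ⨿ A) × (M ⨿ B ⟶ T)) →
      (Σ M : C, (S ⟶ M ⨿ A) × (M ⨿ B ⟶ T)) → Prop :=
    fun a b => ∃ m : a.1 ⟶ b.1, b.2.1 = a.2.1 ≫ coprod.map m (𝟙 A) ∧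
      a.2.2 = coprod.map m (𝟙 B) ≫ b.2.2 with hr
  have hsound : ∀ a b, r a b →
      (a.2.1 ≫ coprod.map (coprod.inl ≫ a.2.2) (𝟙 A), coprod.inr ≫ a.2.2) =
      (b.2.1 ≫ coprod.map (coprod.inl ≫ b.2.2) (𝟙 A), coprod.inr ≫ b.2.2) := by
    rintro ⟨M, f, g⟩ ⟨N, f', g'⟩ ⟨m, h1, h2⟩
    dsimp only at h1 h2 ⊢
    rw [h1, h2]
    simp [Prod.ext_iff, coprod.map_map]
  refine ⟨{
    toFun := Quot.lift
      (fun a => (a.2.1 ≫ coprod.map (coprod.inl ≫ a.2.2) (𝟙 A), coprod.inr ≫ a.2.2)) hsound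
    invFun := fun p => Quot.mk r ⟨T, p.1, coprod.desc (𝟙 T) p.2⟩
    left_inv := ?_
    right_inv := ?_ }⟩
  · rintro ⟨⟨M, f, g⟩⟩
    refine (Quot.sound ⟨coprod.inl ≫ g, rfl, ?_⟩).symm
    apply coprod.hom_ext <;> simp
    · erw [coprod.inl_desc]
    · erw [coprod.inr_desc]
  · rintro ⟨φ, ψ⟩
    simp
    refine ⟨?_, ?_⟩
    · erw [coprod.inl_desc, coprod.map_id_id, Category.comp_id]
    · erw [coprod.inr_desc]
end

section
/- In a cartesian category C, the set of elements of the two-legged shape ∫^{M,N} C(I₀, M × N) × C(I₁ × M, O₁) × C(N × I₂, O₂) is in bijection with C(I₀ × I₁, O₁) × C(I₀ × I₂, O₂). -/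
open CategoryTheory CategoryTheory.Limits

universe u v

section Aux

variable {C : Type u} [Category.{v} C] [HasFiniteProducts C] (I₀ I₁ I₂ O₁ O₂ : C)

/-- Forward map on representatives. -/
noncomputable def tlsF (a : Σ MN : C × C,
    (I₀ ⟶ MN.1 ⨯ MN.2) × (I₁ ⨯ MN.1 ⟶ O₁) × (MN.2 ⨯ I₂ ⟶ O₂)) :
    ((I₀ ⨯ I₁ ⟶ O₁) × (I₀ ⨯ I₂ ⟶ O₂)) :=
  (prod.lift prod.snd (prod.fst ≫ a.2.1 ≫ prod.fst) ≫ a.2.2.1,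
   prod.lift (prod.fst ≫ a.2.1 ≫ prod.snd) prod.snd ≫ a.2.2.2)

lemma tlsF_resp : ∀ a b, (∃ (m : a.1.1 ⟶ b.1.1) (n : a.1.2 ⟶ b.1.2)
      (f : I₀ ⟶ a.1.1 ⨯ a.1.2) (g : I₁ ⨯ b.1.1 ⟶ O₁) (h : b.1.2 ⨯ I₂ ⟶ O₂),
      a.2 = (f, prod.map (𝟙 I₁) m ≫ g, prod.map n (𝟙 I₂) ≫ h) ∧
      b.2 = (f ≫ prod.map m n, g, h)) →
    tlsF I₀ I₁ I₂ O₁ O₂ a = tlsF I₀ I₁ I₂ O₁ O₂ b := by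
  rintro ⟨A, fa, ga, ha⟩ ⟨B, fb, gb, hb⟩ ⟨m, n, f, g, h, h1, h2⟩
  simp only [Prod.mk.injEq] at h1 h2
  obtain ⟨e1, e2, e3⟩ := h1
  obtain ⟨e4, e5, e6⟩ := h2
  unfold tlsF
  dsimp only
  rw [e1, e2, e3, e4, e5, e6]
  refine Prod.ext ?_ ?_
  · dsimp only
    rw [← Category.assoc (prod.lift _ _)]
    congr 1
    ext <;> simp
  · dsimp only
    rw [← Category.assoc (prod.lift _ _)]
    congr 1
    ext <;> simp

end Aux

/-- In a cartesian category `C`, the two-legged shape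
`∫^{M,N} C(I₀, M × N) × C(I₁ × M, O₁) × C(N × I₂, O₂)` is in bijection with
`C(I₀ × I₁, O₁) × C(I₀ × I₂, O₂)`; in particular `I₁` cannot affect `O₂` and `I₂` cannot
affect `O₁`. -/
theorem two_legged_shape_bijection {C : Type u} [Category.{v} C] [HasFiniteProducts C]
    (I₀ I₁ I₂ O₁ O₂ : C) :
    ∃ e : Quot (fun (a b : Σ MN : C × C,
            (I₀ ⟶ MN.1 ⨯ MN.2) × (I₁ ⨯ MN.1 ⟶ O₁) × (MN.2 ⨯ I₂ ⟶ O₂)) =>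
          ∃ (m : a.1.1 ⟶ b.1.1) (n : a.1.2 ⟶ b.1.2)
            (f : I₀ ⟶ a.1.1 ⨯ a.1.2) (g : I₁ ⨯ b.1.1 ⟶ O₁) (h : b.1.2 ⨯ I₂ ⟶ O₂),
            a.2 = (f, prod.map (𝟙 I₁) m ≫ g, prod.map n (𝟙 I₂) ≫ h) ∧
            b.2 = (f ≫ prod.map m n, g, h))
        ≃ ((I₀ ⨯ I₁ ⟶ O₁) × (I₀ ⨯ I₂ ⟶ O₂)),
      ∀ (M N : C) (f : I₀ ⟶ M ⨯ N) (g : I₁ ⨯ M ⟶ O₁) (h : N ⨯ I₂ ⟶ O₂),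
        e (Quot.mk _ ⟨(M, N), f, g, h⟩) =
          (prod.lift prod.snd (prod.fst ≫ f ≫ prod.fst) ≫ g,
           prod.lift (prod.fst ≫ f ≫ prod.snd) prod.snd ≫ h) := by
  refine ⟨⟨Quot.lift (tlsF I₀ I₁ I₂ O₁ O₂) (tlsF_resp I₀ I₁ I₂ O₁ O₂),
      fun p => Quot.mk _ ⟨(I₀, I₀), prod.lift (𝟙 I₀) (𝟙 I₀),
        prod.lift prod.snd prod.fst ≫ p.1, p.2⟩, ?_, ?_⟩,
    fun M N f g h => rfl⟩
  · -- left inverse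
    intro x
    induction x using Quot.ind with
    | _ a =>
      obtain ⟨⟨M, N⟩, f, g, h⟩ := a
      dsimp only [tlsF]
      apply Quot.sound
      refine ⟨f ≫ prod.fst, f ≫ prod.snd, prod.lift (𝟙 I₀) (𝟙 I₀), g, h, ?_, ?_⟩
      · dsimp only
        have e1 : prod.lift prod.snd prod.fst ≫ prod.lift prod.snd (prod.fst ≫ f ≫ prod.fst) ≫ g
            = prod.map (𝟙 I₁) (f ≫ prod.fst) ≫ g := by
          rw [← Category.assoc]
          congr 1
          ext <;> simp only [prod.lift_fst, prod.lift_snd, prod.lift_fst_assoc, prod.lift_snd_assoc, prod.map_fst, prod.map_snd, Category.assoc, Category.id_comp, Category.comp_id]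
        have e2 : prod.lift (prod.fst ≫ f ≫ prod.snd) prod.snd ≫ h
            = prod.map (f ≫ prod.snd) (𝟙 I₂) ≫ h := by
          congr 1
          ext <;> simp only [prod.lift_fst, prod.lift_snd, prod.lift_fst_assoc, prod.lift_snd_assoc, prod.map_fst, prod.map_snd, Category.assoc, Category.id_comp, Category.comp_id]
        rw [e1, e2]
      · dsimp only
        have e3 : (f : I₀ ⟶ M ⨯ N)
            = prod.lift (𝟙 I₀) (𝟙 I₀) ≫ prod.map (f ≫ prod.fst) (f ≫ prod.snd) := by
          ext <;> simp only [prod.lift_fst, prod.lift_snd, prod.lift_fst_assoc, prod.lift_snd_assoc, prod.map_fst, prod.map_snd, Category.assoc, Category.id_comp, Category.comp_id]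
        rw [← e3]
  · -- right inverse
    intro p
    obtain ⟨p₁, p₂⟩ := p
    dsimp only [tlsF]
    refine Prod.ext ?_ ?_
    · rw [← Category.assoc,
        show prod.lift prod.snd (prod.fst ≫ prod.lift (𝟙 I₀) (𝟙 I₀) ≫ prod.fst) ≫
          prod.lift prod.snd prod.fst = 𝟙 (I₀ ⨯ I₁) from by ext <;> simp only [prod.lift_fst, prod.lift_snd, prod.lift_fst_assoc, prod.lift_snd_assoc, prod.map_fst, prod.map_snd, Category.assoc, Category.id_comp, Category.comp_id],
        Category.id_comp]
    · rw [show prod.lift (prod.fst ≫ prod.lift (𝟙 I₀) (𝟙 I₀) ≫ prod.snd) prod.snd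
          = 𝟙 (I₀ ⨯ I₂) from by ext <;> simp only [prod.lift_fst, prod.lift_snd, prod.lift_fst_assoc, prod.lift_snd_assoc, prod.map_fst, prod.map_snd, Category.assoc, Category.id_comp, Category.comp_id],
        Category.id_comp]
end

section
/- In a cartesian category C, for objects P, A, B the set of 'monoidal learners' ∫^{P,Q} C(P × A, Q × B) × C(Q × B, P × A) is in bijection with Σ'-style data: the set ∫^P C(P × A, B) × C(P × A × B, A) × C(P × A × B, P), i.e. every class of a pair of morphisms f : P × A → Q × B, g : Q × B → P × A reduces (by copying via the product structure and Yoneda reduction on Q) to a parameters object P with an implementation C(P × A, B), a request C(P × A × B, A), and an update C(P × A × B, P), up to the sliding equivalence in P. -/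
open CategoryTheory CategoryTheory.Limits

universe u v

/-- In a cartesian category `C`, the set of monoidal learners
`∫^{P,Q} C(P × A, Q × B) × C(Q × B, P × A)` is in bijection with the set
`∫^P C(P × A, B) × C(P × A × B, A) × C(P × A × B, P)` of (classes of) parameters together
with an implementation, a request and an update morphism. -/
theorem learner_bijection {C : Type u} [Category.{v} C] [HasFiniteProducts C] (A B : C) :
    Nonempty
      (Quot (fun (a b : Σ PQ : C × C,
            (PQ.1 ⨯ A ⟶ PQ.2 ⨯ B) × (PQ.2 ⨯ B ⟶ PQ.1 ⨯ A)) =>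
          ∃ (m : a.1.1 ⟶ b.1.1) (n : a.1.2 ⟶ b.1.2)
            (f : b.1.1 ⨯ A ⟶ a.1.2 ⨯ B) (g : b.1.2 ⨯ B ⟶ a.1.1 ⨯ A),
            a.2 = (prod.map m (𝟙 A) ≫ f, prod.map n (𝟙 B) ≫ g) ∧
            b.2 = (f ≫ prod.map n (𝟙 B), g ≫ prod.map m (𝟙 A)))
        ≃
       Quot (fun (a b : Σ P : C,
            (P ⨯ A ⟶ B) × ((P ⨯ A) ⨯ B ⟶ A) × ((P ⨯ A) ⨯ B ⟶ P)) =>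
          ∃ (m : a.1 ⟶ b.1) (f : b.1 ⨯ A ⟶ B)
            (r : (b.1 ⨯ A) ⨯ B ⟶ A) (s : (b.1 ⨯ A) ⨯ B ⟶ a.1),
            a.2 = (prod.map m (𝟙 A) ≫ f,
                   prod.map (prod.map m (𝟙 A)) (𝟙 B) ≫ r,
                   prod.map (prod.map m (𝟙 A)) (𝟙 B) ≫ s) ∧
            b.2 = (f, r, s ≫ m))) := by
  constructor
  refine Equiv.mk
    (Quot.lift
      (fun a => Quot.mk _ ⟨a.1.1,
        a.2.1 ≫ prod.snd,
        prod.map (a.2.1 ≫ prod.fst) (𝟙 B) ≫ a.2.2 ≫ prod.snd,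
        prod.map (a.2.1 ≫ prod.fst) (𝟙 B) ≫ a.2.2 ≫ prod.fst⟩)
      ?_)
    (Quot.lift
      (fun a => Quot.mk _ ⟨(a.1, a.1 ⨯ A),
        prod.lift (𝟙 (a.1 ⨯ A)) a.2.1,
        prod.lift a.2.2.2 a.2.2.1⟩)
      ?_)
    ?_ ?_
  · -- forward respects relation
    rintro ⟨⟨P₁, Q₁⟩, fga⟩ ⟨⟨P₂, Q₂⟩, fgb⟩ ⟨m, n, f, g, h1, h2⟩
    dsimp only at m n f g h1 h2 ⊢
    simp only [h1, h2]
    apply Quot.sound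
    refine ⟨m, f ≫ prod.snd,
      prod.map (f ≫ prod.fst ≫ n) (𝟙 B) ≫ g ≫ prod.snd,
      prod.map (f ≫ prod.fst ≫ n) (𝟙 B) ≫ g ≫ prod.fst, ?_, ?_⟩ <;>
      simp only [Prod.mk.injEq] <;> repeat' apply And.intro
    all_goals first
      | trivial
      | (apply Limits.prod.hom_ext <;>
          simp [prod.map_map_assoc, prod.comp_lift, Category.assoc, prod.lift_fst, prod.lift_snd, prod.lift_fst_assoc, prod.lift_snd_assoc])
      | simp [prod.map_map_assoc, prod.comp_lift, Category.assoc, prod.lift_fst, prod.lift_snd, prod.lift_fst_assoc, prod.lift_snd_assoc]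
  · -- backward respects relation
    rintro ⟨P₁, irs₁⟩ ⟨P₂, irs₂⟩ ⟨m, f, r, s, h1, h2⟩
    dsimp only at m f r s h1 h2 ⊢
    simp only [h1, h2]
    refine Eq.trans
      (Quot.sound (b := ⟨(P₁, P₂ ⨯ A), prod.map m (𝟙 A) ≫ prod.lift (𝟙 (P₂ ⨯ A)) f,
        prod.lift s r⟩) ?_)
      (Quot.sound ?_)
    · -- step 1: slide n' = prod.map m (𝟙 A)
      refine ⟨𝟙 P₁, prod.map m (𝟙 A),
        prod.lift (𝟙 (P₁ ⨯ A)) (prod.map m (𝟙 A) ≫ f),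
        prod.lift s r, ?_, ?_⟩ <;>
        simp only [Prod.mk.injEq] <;> repeat' apply And.intro
      all_goals first
        | trivial
        | (apply Limits.prod.hom_ext <;>
            simp [prod.map_map_assoc, prod.comp_lift, Category.assoc, prod.lift_fst, prod.lift_snd, prod.lift_fst_assoc, prod.lift_snd_assoc])
        | simp [prod.map_map_assoc, prod.comp_lift, Category.assoc, prod.lift_fst, prod.lift_snd, prod.lift_fst_assoc, prod.lift_snd_assoc]
    · -- step 2: slide m
      refine ⟨m, 𝟙 (P₂ ⨯ A), prod.lift (𝟙 (P₂ ⨯ A)) f, prod.lift s r, ?_, ?_⟩ <;>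
        simp only [Prod.mk.injEq] <;> repeat' apply And.intro
      all_goals first
        | trivial
        | (apply Limits.prod.hom_ext <;>
            simp [prod.map_map_assoc, prod.comp_lift, Category.assoc, prod.lift_fst, prod.lift_snd, prod.lift_fst_assoc, prod.lift_snd_assoc])
        | simp [prod.map_map_assoc, prod.comp_lift, Category.assoc, prod.lift_fst, prod.lift_snd, prod.lift_fst_assoc, prod.lift_snd_assoc]
  · -- left inverse
    refine Quot.ind ?_
    rintro ⟨⟨P, Q⟩, f, g⟩
    apply Quot.sound
    refine ⟨𝟙 P, f ≫ prod.fst, prod.lift (𝟙 (P ⨯ A)) (f ≫ prod.snd), g, ?_, ?_⟩ <;>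
      simp only [Prod.mk.injEq] <;> repeat' apply And.intro
    all_goals first
      | trivial
      | (apply Limits.prod.hom_ext <;>
          simp [prod.map_map_assoc, prod.comp_lift, Category.assoc, prod.lift_fst, prod.lift_snd, prod.lift_fst_assoc, prod.lift_snd_assoc])
      | simp [prod.map_map_assoc, prod.comp_lift, Category.assoc, prod.lift_fst, prod.lift_snd, prod.lift_fst_assoc, prod.lift_snd_assoc]
  · -- right inverse
    refine Quot.ind ?_
    rintro ⟨P, i, r, s⟩
    simp [prod.lift_fst, prod.lift_snd, prod.lift_fst_assoc, prod.lift_snd_assoc]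
end
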